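/- Let K be a field equipped with an absolute value v (a map to ℝ that is multiplicative, vanishes exactly at 0, and satisfies the triangle inequality), and let λ ∈ K be nonzero with v(λ) ≠ 1. Let (k_n) and (l_n) be sequences of integers such that for every pair of integers (α,β) ≠ (0,0) and every integer γ, the set {n ∈ ℕ : α·k_n + β·l_n = γ} is finite. Then for every nonzero polynomial W in two variables with coefficients in K, the set {n ∈ ℕ : W(λ^{k_n}, λ^{l_n}) = 0} is finite. -/

import Mathlib

lemma finite_zpow_mem_Icc_aux {c : ℝ} (hc : 1 < c) {A B : ℝ} (hA : 0 < A) :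
    {m : ℤ | c ^ m ∈ Set.Icc A B}.Finite := by
  obtain ⟨N, hN⟩ := pow_unbounded_of_one_lt B hc
  obtain ⟨M, hM⟩ := pow_unbounded_of_one_lt A⁻¹ hc
  refine (Set.finite_Icc (-(M : ℤ)) (N : ℤ)).subset fun m hm => ?_
  obtain ⟨h1, h2⟩ := hm
  constructor
  · have : c ^ (-(M:ℤ)) < c ^ m := by
      calc c ^ (-(M:ℤ)) = (c ^ (M:ℤ))⁻¹ := by rw [zpow_neg]
        _ < A := by
          rw [inv_lt_comm₀ (by positivity) hA]
          rw [← zpow_natCast] at hM; exact hM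
        _ ≤ c ^ m := h1
    exact le_of_lt ((zpow_lt_zpow_iff_right₀ hc).mp this)
  · have : c ^ m < c ^ (N:ℤ) := by
      calc c ^ m ≤ B := h2
        _ < c ^ (N:ℤ) := by rw [zpow_natCast]; exact hN
    exact le_of_lt ((zpow_lt_zpow_iff_right₀ hc).mp this)

lemma finite_zpow_mem_Icc {c : ℝ} (hc : 0 < c) (hc1 : c ≠ 1) {A B : ℝ} (hA : 0 < A) :
    {m : ℤ | c ^ m ∈ Set.Icc A B}.Finite := by
  rcases lt_or_gt_of_ne hc1 with hlt | hgt
  · have hc' : 1 < c⁻¹ := one_lt_inv₀ hc |>.mpr hlt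
    have := (finite_zpow_mem_Icc_aux hc' (A := A) (B := B) hA).image (fun m => -m)
    refine this.subset fun m hm => ?_
    refine ⟨-m, ?_, by ring⟩
    simpa [inv_zpow, zpow_neg] using hm
  · exact finite_zpow_mem_Icc_aux hgt hA

/-- Let `K` be a field with an absolute value `v`, and `λ ∈ K` nonzero with `v λ ≠ 1`.  If
the integer sequences `(k n)` and `(l n)` satisfy `α k_n + β l_n = γ` only finitely often
for every `(α, β) ≠ (0, 0)` and every `γ`, then every nonzero two-variable polynomial over
`K` vanishes at `(λ ^ k_n, λ ^ l_n)` only finitely often. -/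
theorem finite_zero_set_of_absoluteValue_ne_one
    {K : Type*} [Field K] (v : AbsoluteValue K ℝ) (l : K) (hl : l ≠ 0)
    (hv : v l ≠ 1) (k L : ℕ → ℤ)
    (h : ∀ α β : ℤ, (α, β) ≠ (0, 0) → ∀ γ : ℤ,
      {n : ℕ | α * k n + β * L n = γ}.Finite) :
    ∀ W : MvPolynomial (Fin 2) K, W ≠ 0 →
      {n : ℕ | MvPolynomial.eval ![l ^ k n, l ^ L n] W = 0}.Finite := by
  intro W hW
  classical
  set c := v l with hc_def
  have hc0 : 0 < c := v.pos hl
  set S := W.support with hS_def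
  have hSne : S.Nonempty := MvPolynomial.support_nonempty.mpr hW
  -- exponents
  set e : ℕ → (Fin 2 →₀ ℕ) → ℤ := fun n d => (d 0 : ℤ) * k n + (d 1 : ℤ) * L n with he_def
  have heval : ∀ n, MvPolynomial.eval ![l ^ k n, l ^ L n] W
      = ∑ d ∈ S, MvPolynomial.coeff d W * l ^ (e n d) := by
    intro n
    rw [MvPolynomial.eval_eq']
    refine Finset.sum_congr rfl fun d hd => ?_
    congr 1
    rw [Fin.prod_univ_two]
    simp only [Matrix.cons_val_zero, Matrix.cons_val_one, Matrix.head_cons]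
    rw [← zpow_natCast (l ^ k n), ← zpow_natCast (l ^ L n), ← zpow_mul, ← zpow_mul,
      ← zpow_add₀ hl]
    congr 1
    simp only [he_def]
    ring
  -- the target finite sets
  set T : (Fin 2 →₀ ℕ) → (Fin 2 →₀ ℕ) → Set ℤ := fun d d' =>
    {γ : ℤ | c ^ γ ∈ Set.Icc (v (MvPolynomial.coeff d' W) / v (MvPolynomial.coeff d W))
      ((S.card : ℝ) * v (MvPolynomial.coeff d' W) / v (MvPolynomial.coeff d W))} with hT_def
  have hTfin : ∀ d ∈ S, ∀ d' ∈ S, (T d d').Finite := by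
    intro d hd d' hd'
    have hcd : 0 < v (MvPolynomial.coeff d W) := v.pos (MvPolynomial.mem_support_iff.mp hd)
    have hcd' : 0 < v (MvPolynomial.coeff d' W) := v.pos (MvPolynomial.mem_support_iff.mp hd')
    exact finite_zpow_mem_Icc hc0 hv (by positivity)
  refine Set.Finite.subset (Set.Finite.biUnion S.finite_toSet fun d hd =>
    Set.Finite.biUnion S.finite_toSet fun d' hd' => ?_)
    (?_ : _ ⊆ ⋃ d ∈ (S : Set (Fin 2 →₀ ℕ)), ⋃ d' ∈ (S : Set (Fin 2 →₀ ℕ)),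
      {n : ℕ | d ≠ d' ∧ ((d 0 : ℤ) - d' 0) * k n + ((d 1 : ℤ) - d' 1) * L n ∈ T d d'})
  · -- finiteness of each piece
    by_cases hdd : d = d'
    · refine Set.Finite.subset (Set.finite_empty) fun n hn => (hn.1 hdd).elim
    · have hsub : {n : ℕ | d ≠ d' ∧ ((d 0 : ℤ) - d' 0) * k n + ((d 1 : ℤ) - d' 1) * L n ∈ T d d'}
          ⊆ ⋃ γ ∈ T d d', {n : ℕ | ((d 0 : ℤ) - d' 0) * k n + ((d 1 : ℤ) - d' 1) * L n = γ} := by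
        intro n hn
        exact Set.mem_biUnion hn.2 rfl
      refine Set.Finite.subset (Set.Finite.biUnion (hTfin d hd d' hd') fun γ hγ => ?_) hsub
      refine h _ _ ?_ γ
      simp only [Ne, Prod.mk.injEq, not_and, sub_eq_zero]
      intro h0 h1
      apply hdd
      ext i
      have h0' : d 0 = d' 0 := by exact_mod_cast h0
      have h1' : d 1 = d' 1 := by exact_mod_cast h1
      fin_cases i <;> assumption
  · -- the inclusion
    intro n hn
    simp only [Set.mem_setOf_eq, heval n] at hn
    set t : (Fin 2 →₀ ℕ) → K := fun d => MvPolynomial.coeff d W * l ^ (e n d) with ht_def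
    have htpos : ∀ d ∈ S, 0 < v (t d) := by
      intro d hd
      refine v.pos (mul_ne_zero (MvPolynomial.mem_support_iff.mp hd) (zpow_ne_zero _ hl))
    obtain ⟨d, hdS, hdmax⟩ := S.exists_max_image (fun d => v (t d)) hSne
    have herase : (S.erase d).Nonempty := by
      rcases (S.erase d).eq_empty_or_nonempty with he | he
      · exfalso
        rcases (Finset.erase_eq_empty_iff S d).mp he with h' | h'
        · exact hSne.ne_empty h'
        · have hzero : t d = 0 := by rwa [h', Finset.sum_singleton] at hn
          exact (htpos d hdS).ne' (by rw [hzero, map_zero])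
      · exact he
    obtain ⟨d', hd'e, hd'max⟩ := (S.erase d).exists_max_image (fun d => v (t d)) herase
    have hd'S : d' ∈ S := Finset.mem_of_mem_erase hd'e
    have hne : d ≠ d' := (Finset.ne_of_mem_erase hd'e).symm
    -- key inequalities
    have hkey1 : v (t d') ≤ v (t d) := hdmax d' hd'S
    have hkey2 : v (t d) ≤ (S.card : ℝ) * v (t d') := by
      have h1 : t d = -∑ x ∈ S.erase d, t x := by
        rw [← Finset.add_sum_erase S t hdS] at hn
        linear_combination hn
      calc v (t d) = v (∑ x ∈ S.erase d, t x) := by rw [h1, v.map_neg]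
        _ ≤ ∑ x ∈ S.erase d, v (t x) := v.sum_le _ _
        _ ≤ (S.erase d).card • v (t d') := Finset.sum_le_card_nsmul _ _ _ hd'max
        _ = ((S.erase d).card : ℝ) * v (t d') := by rw [nsmul_eq_mul]
        _ ≤ (S.card : ℝ) * v (t d') := by
            have : (S.erase d).card ≤ S.card := Finset.card_erase_le
            exact mul_le_mul_of_nonneg_right (by exact_mod_cast this) (v.nonneg _)
    -- compute absolute values
    have hvt : ∀ x, v (t x) = v (MvPolynomial.coeff x W) * c ^ (e n x) := by
      intro x
      rw [ht_def]
      simp only [map_mul, map_zpow₀, hc_def]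
    have ha : 0 < v (MvPolynomial.coeff d W) := v.pos (MvPolynomial.mem_support_iff.mp hdS)
    have ha' : 0 < v (MvPolynomial.coeff d' W) := v.pos (MvPolynomial.mem_support_iff.mp hd'S)
    have hp : (0:ℝ) < c ^ (e n d) := zpow_pos hc0 _
    have hp' : (0:ℝ) < c ^ (e n d') := zpow_pos hc0 _
    rw [hvt, hvt] at hkey1 hkey2
    -- membership in the union
    refine Set.mem_biUnion (Finset.mem_coe.mpr hdS) (Set.mem_biUnion (Finset.mem_coe.mpr hd'S) ?_)
    refine ⟨hne, ?_⟩
    have hexp : ((d 0 : ℤ) - d' 0) * k n + ((d 1 : ℤ) - d' 1) * L n = e n d - e n d' := by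
      simp only [he_def]; ring
    rw [hexp]
    have hczpow : c ^ (e n d - e n d') = c ^ (e n d) / c ^ (e n d') := by
      rw [zpow_sub₀ hc0.ne']
    simp only [hT_def, Set.mem_setOf_eq, Set.mem_Icc, hczpow]
    constructor
    · rw [div_le_div_iff₀ ha hp']
      nlinarith
    · rw [div_le_div_iff₀ hp' ha]
      nlinarith
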